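/- Let J be a finite index set, r ∉ J, a : J → ℝ with a_j ≥ 0 for all j ∈ J, b ∈ ℝ, and P ⊆ J. Set b̃ := b − Σ_{j∈P} a_j and assume 0 < b̃ < 1, so that f(b̃) = b̃ where f(t) := t − ⌊t⌋. Define ψ(t) := ⌊t⌋ + min(1, f(t)/f(b̃)). Then every x ∈ {0,1}^{J ∪ {r}} satisfying x_r + Σ_{j∈J} a_j x_j ≥ b also satisfies the cMIR constraint x_r + Σ_{j∈J∖P} ψ(a_j)·x_j − Σ_{j∈P} ψ(−a_j)·x_j ≥ 1 − Σ_{j∈P} ψ(−a_j). -/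

import Mathlib

noncomputable def φ (B t : ℝ) : ℝ := (⌊t⌋ : ℝ) + min B (Int.fract t) / B

lemma phi_eq (B t : ℝ) (hB : 0 < B) :
    (⌊t⌋ : ℝ) + min 1 (Int.fract t / B) = φ B t := by
  unfold φ
  rw [← min_div_div_right hB.le, div_self hB.ne']

lemma phi_zero (B : ℝ) (hB : 0 < B) : φ B 0 = 0 := by simp [φ, hB.le]

lemma phi_self (B : ℝ) (hB0 : 0 < B) (hB1 : B < 1) : φ B B = 1 := by
  have hfr : Int.fract B = B := Int.fract_eq_self.mpr ⟨hB0.le, hB1⟩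
  have hf : ⌊B⌋ = 0 := by
    rw [Int.floor_eq_zero_iff]; constructor <;> simp [hB0.le, hB1]
  simp [φ, hfr, hf, div_self hB0.ne']

lemma phi_mono (B : ℝ) (hB : 0 < B) {s t : ℝ} (hst : s ≤ t) : φ B s ≤ φ B t := by
  unfold φ
  have hfs0 := Int.fract_nonneg s
  have hft0 := Int.fract_nonneg t
  have hfl := Int.floor_le_floor hst
  rcases eq_or_lt_of_le hfl with h | h
  · have hf : Int.fract s ≤ Int.fract t := by
      unfold Int.fract; rw [h]; linarith
    have h2 : (⌊s⌋:ℝ) = (⌊t⌋:ℝ) := by exact_mod_cast h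
    have : min B (Int.fract s) / B ≤ min B (Int.fract t) / B := by gcongr
    linarith
  · have h1 : ((⌊s⌋:ℝ)) + 1 ≤ (⌊t⌋:ℝ) := by exact_mod_cast h
    have hms : min B (Int.fract s) / B ≤ 1 := by
      rw [div_le_one hB]; exact min_le_left _ _
    have hmt : 0 ≤ min B (Int.fract t) / B := by positivity
    linarith

lemma phi_superadd (B : ℝ) (hB0 : 0 < B) (hB1 : B < 1) (s t : ℝ) :
    φ B (s + t) ≤ φ B s + φ B t := by
  unfold φ
  have hfs0 := Int.fract_nonneg s
  have hft0 := Int.fract_nonneg t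
  have hfs1 := Int.fract_lt_one s
  have hft1 := Int.fract_lt_one t
  have hst : s + t = (Int.fract s + Int.fract t) + ((⌊s⌋ + ⌊t⌋ : ℤ) : ℝ) := by
    unfold Int.fract; push_cast; ring
  rcases lt_or_ge (Int.fract s + Int.fract t) 1 with h | h
  · have hfl : ⌊s + t⌋ = ⌊s⌋ + ⌊t⌋ := by
      rw [hst, Int.floor_add_intCast]
      have : ⌊Int.fract s + Int.fract t⌋ = 0 := by
        rw [Int.floor_eq_zero_iff]
        exact ⟨by linarith, by simpa using h⟩
      omega
    have hfr : Int.fract (s + t) = Int.fract s + Int.fract t := by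
      unfold Int.fract
      rw [hfl]; push_cast; ring
    rw [hfl, hfr]
    push_cast
    have hm : min B (Int.fract s + Int.fract t) ≤ min B (Int.fract s) + min B (Int.fract t) := by
      rcases min_cases B (Int.fract s) with ⟨e1,f1⟩|⟨e1,f1⟩ <;>
      rcases min_cases B (Int.fract t) with ⟨e2,f2⟩|⟨e2,f2⟩ <;>
      rcases min_cases B (Int.fract s + Int.fract t) with ⟨e3,f3⟩|⟨e3,f3⟩ <;>
      rw [e1, e2, e3] <;> linarith
    have h4 := (div_le_div_iff_of_pos_right hB0).mpr hm
    rw [add_div] at h4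
    linarith
  · have hfl : ⌊s + t⌋ = ⌊s⌋ + ⌊t⌋ + 1 := by
      rw [hst, Int.floor_add_intCast]
      have : ⌊Int.fract s + Int.fract t⌋ = 1 := by
        rw [Int.floor_eq_iff]
        push_cast
        constructor <;> linarith
      omega
    have hfr : Int.fract (s + t) = Int.fract s + Int.fract t - 1 := by
      unfold Int.fract
      rw [hfl]; push_cast; ring
    rw [hfl, hfr]
    push_cast
    have hm : B + min B (Int.fract s + Int.fract t - 1)
        ≤ min B (Int.fract s) + min B (Int.fract t) := by
      rcases min_cases B (Int.fract s) with ⟨e1,f1⟩|⟨e1,f1⟩ <;>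
      rcases min_cases B (Int.fract t) with ⟨e2,f2⟩|⟨e2,f2⟩ <;>
      rcases min_cases B (Int.fract s + Int.fract t - 1) with ⟨e3,f3⟩|⟨e3,f3⟩ <;>
      rw [e1, e2, e3] <;> linarith
    have h4 := (div_le_div_iff_of_pos_right hB0).mpr hm
    rw [add_div, add_div, div_self hB0.ne'] at h4
    linarith

lemma phi_sum (B : ℝ) (hB0 : 0 < B) (hB1 : B < 1) {ι : Type*} (S : Finset ι) (c : ι → ℝ) :
    φ B (∑ j ∈ S, c j) ≤ ∑ j ∈ S, φ B (c j) := by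
  classical
  induction S using Finset.induction_on with
  | empty => simp [phi_zero B hB0]
  | @insert k S' hj ih =>
    rw [Finset.sum_insert hj, Finset.sum_insert hj]
    calc φ B (c k + ∑ j ∈ S', c j) ≤ φ B (c k) + φ B (∑ j ∈ S', c j) :=
          phi_superadd B hB0 hB1 _ _
      _ ≤ _ := by linarith




/-- Proposition 3 (validity part): the cMIR constraint, obtained by complementing
all variables in `P` and applying the MIR cut, is valid for all binary points
satisfying the reason constraint `x_r + ∑_{j∈J} a_j x_j ≥ b`. -/
theorem cMIR_valid
    {ι : Type*} [DecidableEq ι] (J : Finset ι) (r : ι) (hr : r ∉ J)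
    (a : ι → ℝ) (ha : ∀ j ∈ J, 0 ≤ a j) (b : ℝ)
    (P : Finset ι) (hP : P ⊆ J)
    (btil : ℝ) (hbt : btil = b - ∑ j ∈ P, a j)
    (h0 : 0 < btil) (h1 : btil < 1)
    (ψ : ℝ → ℝ)
    (hψ : ∀ t, ψ t = (⌊t⌋ : ℝ) + min 1 (Int.fract t / Int.fract btil))
    (x : ι → ℝ) (hx : ∀ j ∈ insert r J, x j = 0 ∨ x j = 1)
    (hsat : x r + ∑ j ∈ J, a j * x j ≥ b) :
    x r + ∑ j ∈ J \ P, ψ (a j) * x j - ∑ j ∈ P, ψ (-a j) * x j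
      ≥ 1 - ∑ j ∈ P, ψ (-a j) := by
  classical
  have hfb : Int.fract btil = btil := Int.fract_eq_self.mpr ⟨h0.le, h1⟩
  have hψ' : ∀ t, ψ t = φ btil t := by
    intro t; rw [hψ t, hfb, phi_eq _ _ h0]
  set c : ι → ℝ := fun j => if j = r then 1 else if j ∈ P then -a j else a j with hc
  set z : ι → ℝ := fun j => if j ∈ P then 1 - x j else x j with hzdef
  set T : Finset ι := insert r J with hT
  have hrP : r ∉ P := fun h => hr (hP h)
  have hz : ∀ j ∈ T, z j = 0 ∨ z j = 1 := by
    intro j hj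
    by_cases hjP : j ∈ P
    · rcases hx j hj with h | h <;> simp [hzdef, hjP, h]
    · rcases hx j hj with h | h <;> simp [hzdef, hjP, h]
  -- sums split over J
  have eJP : ∀ (f : ι → ℝ), ∑ j ∈ J \ P, f j + ∑ j ∈ P, f j = ∑ j ∈ J, f j :=
    fun f => Finset.sum_sdiff hP
  have hcz1 : ∑ j ∈ J \ P, c j * z j = ∑ j ∈ J \ P, a j * x j := by
    apply Finset.sum_congr rfl
    intro j hj
    have hjJ := (Finset.mem_sdiff.mp hj).1
    have hjP := (Finset.mem_sdiff.mp hj).2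
    have hjr : j ≠ r := fun h => hr (h ▸ hjJ)
    simp [hc, hzdef, hjr, hjP]
  have hcz2 : ∑ j ∈ P, c j * z j = ∑ j ∈ P, (-(a j) + a j * x j) := by
    apply Finset.sum_congr rfl
    intro j hj
    have hjr : j ≠ r := fun h => hr (h ▸ hP hj)
    simp [hc, hzdef, hjr, hj]; ring
  have hsum1 : ∑ j ∈ T, c j * z j ≥ btil := by
    rw [hT, Finset.sum_insert hr]
    have hcr : c r * z r = x r := by simp [hc, hzdef, hrP]
    rw [hcr, ← eJP (fun j => c j * z j), hcz1, hcz2]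
    have e3 : ∑ j ∈ P, (-(a j) + a j * x j) = -(∑ j ∈ P, a j) + ∑ j ∈ P, a j * x j := by
      rw [Finset.sum_add_distrib, Finset.sum_neg_distrib]
    have e4 := eJP (fun j => a j * x j)
    rw [e3]
    linarith [hsat]
  -- the MIR cut on complemented variables
  have hψ1 : ψ 1 = 1 := by
    rw [hψ' 1]
    have : Int.fract (1:ℝ) = 0 := by norm_num
    simp [φ, this, h0.le]
  set S : Finset ι := T.filter (fun j => z j = 1) with hS
  have hA : ∑ j ∈ S, c j = ∑ j ∈ T, c j * z j := by
    rw [hS, Finset.sum_filter]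
    apply Finset.sum_congr rfl
    intro j hj
    rcases hz j hj with h | h <;> simp [h]
  have hBsum : ∑ j ∈ S, ψ (c j) = ∑ j ∈ T, ψ (c j) * z j := by
    rw [hS, Finset.sum_filter]
    apply Finset.sum_congr rfl
    intro j hj
    rcases hz j hj with h | h <;> simp [h]
  have hcut : ∑ j ∈ T, ψ (c j) * z j ≥ 1 := by
    rw [← hBsum]
    calc (1:ℝ) = φ btil btil := (phi_self btil h0 h1).symm
      _ ≤ φ btil (∑ j ∈ S, c j) := phi_mono btil h0 (by rw [hA]; exact hsum1)
      _ ≤ ∑ j ∈ S, φ btil (c j) := phi_sum btil h0 h1 S c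
      _ = ∑ j ∈ S, ψ (c j) := by simp_rw [hψ']
  -- expand the cut
  have e5 : ∑ j ∈ J \ P, ψ (c j) * z j = ∑ j ∈ J \ P, ψ (a j) * x j := by
    apply Finset.sum_congr rfl
    intro j hj
    have hjJ := (Finset.mem_sdiff.mp hj).1
    have hjP := (Finset.mem_sdiff.mp hj).2
    have hjr : j ≠ r := fun h => hr (h ▸ hjJ)
    simp [hc, hzdef, hjr, hjP]
  have e6 : ∑ j ∈ P, ψ (c j) * z j = ∑ j ∈ P, ψ (-a j) - ∑ j ∈ P, ψ (-a j) * x j := by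
    rw [← Finset.sum_sub_distrib]
    apply Finset.sum_congr rfl
    intro j hj
    have hjr : j ≠ r := fun h => hr (h ▸ hP hj)
    simp [hc, hzdef, hjr, hj]; ring
  rw [hT, Finset.sum_insert hr] at hcut
  have hcr : ψ (c r) * z r = x r := by simp [hc, hzdef, hrP, hψ1]
  rw [hcr, ← eJP (fun j => ψ (c j) * z j), e5, e6] at hcut
  linarith [hcut]
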